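/- Let X be a Banach space, Φ : X → ℝ locally Lipschitz. The generalized directional derivative Φ°(u;v) := limsup_{h→0, t↓0} (Φ(u+h+tv) − Φ(u+h))/t satisfies: if Φ(σu) = Φ(u) for all σ > 0 near 1 and all u in a neighborhood, and Φ is Lipschitz with constant C near u, then Φ°(u; su) = 0 for every s ∈ ℝ. -/
import Mathlib


open Filter

set_option maxHeartbeats 1000000

/-- Clarke's generalized directional derivative of `Φ` at `u` in the direction `v`. -/
noncomputable def clarkeDeriv {X : Type*} [NormedAddCommGroup X] [NormedSpace ℝ X]
    (Φ : X → ℝ) (u v : X) : ℝ :=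
  Filter.limsup (fun p : X × ℝ => (Φ (u + p.1 + p.2 • v) - Φ (u + p.1)) / p.2)
    ((nhds (0 : X)) ×ˢ (nhdsWithin (0 : ℝ) (Set.Ioi 0)))

theorem stmt_12 {X : Type*} [NormedAddCommGroup X] [NormedSpace ℝ X]
    (Φ : X → ℝ) (hloclip : LocallyLipschitz Φ) (u : X) (hu : u ≠ 0)
    (ε : ℝ) (hε : 0 < ε) (C : NNReal)
    (hlip : LipschitzOnWith C Φ (Metric.ball u ε))
    (hhom : ∀ w ∈ Metric.ball u ε, ∀ σ : ℝ, 0 < σ → |σ - 1| < ε → Φ (σ • w) = Φ w) :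
    ∀ s : ℝ, clarkeDeriv Φ u (s • u) = 0 := by
  intro s
  haveI : ((nhds (0 : X)) ×ˢ (nhdsWithin (0 : ℝ) (Set.Ioi 0))).NeBot :=
    Filter.prod_neBot.mpr ⟨inferInstance, nhdsGT_neBot 0⟩
  have hs1 : (0:ℝ) < |s| + 1 := by positivity
  have hu2 : (0:ℝ) < ‖u‖ + 2 := by positivity
  set δ' : ℝ := min (ε / (3*(|s|+1)*(‖u‖+2))) (1/(2*(|s|+1))) with hδ'def
  set δ : ℝ := min 1 (ε/3) with hδdef
  have hδ'pos : 0 < δ' := lt_min (by positivity) (by positivity)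
  have hδpos : 0 < δ := lt_min one_pos (by positivity)
  have key : ∀ᶠ p : X × ℝ in (nhds (0:X)) ×ˢ (nhdsWithin (0:ℝ) (Set.Ioi 0)),
      ‖(Φ (u + p.1 + p.2 • (s • u)) - Φ (u + p.1)) / p.2‖ ≤ (C:ℝ) * (|s| * ‖p.1‖) := by
    filter_upwards [Filter.prod_mem_prod (Metric.ball_mem_nhds 0 hδpos)
      (Ioo_mem_nhdsGT_of_mem ⟨le_refl 0, hδ'pos⟩)] with p hp
    obtain ⟨hp1, hp2⟩ := hp
    set h := p.1 with hh'
    set t := p.2 with ht'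
    have hh : ‖h‖ < δ := by simpa using hp1
    have ht0 : 0 < t := hp2.1
    have ht1 : t < δ' := hp2.2
    have hhe : ‖h‖ < ε/3 := lt_of_lt_of_le hh (min_le_right _ _)
    have hh1 : ‖h‖ < 1 := lt_of_lt_of_le hh (min_le_left _ _)
    have ht1' : t < ε / (3*(|s|+1)*(‖u‖+2)) := lt_of_lt_of_le ht1 (min_le_left _ _)
    have ht2' : t < 1/(2*(|s|+1)) := lt_of_lt_of_le ht1 (min_le_right _ _)
    have hA : t * (|s|+1) * (‖u‖+2) < ε/3 := by
      have hD : t * (3*(|s|+1)*(‖u‖+2)) < ε := (lt_div_iff₀ (by positivity)).mp ht1'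
      nlinarith [hD]
    have hAs : t * |s| ≤ t * (|s|+1) * (‖u‖+2) := by
      nlinarith [mul_nonneg ht0.le (mul_nonneg (abs_nonneg s) (norm_nonneg u)),
        mul_nonneg ht0.le (norm_nonneg u), mul_nonneg ht0.le (abs_nonneg s), ht0.le]
    have hA2 : t * |s| < 1/2 := by
      have hD : t * (2*(|s|+1)) < 1 := (lt_div_iff₀ (by positivity)).mp ht2'
      nlinarith [mul_nonneg ht0.le (abs_nonneg s), ht0.le]
    -- memberships in the ball
    have m1 : u + h ∈ Metric.ball u ε := by
      rw [Metric.mem_ball, dist_eq_norm]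
      simp only [add_sub_cancel_left]
      linarith
    set σ : ℝ := 1 + t * s with hσdef
    have hσpos : 0 < σ := by
      have : |t * s| < 1/2 := by rwa [abs_mul, abs_of_pos ht0]
      have := neg_lt_of_abs_lt this
      simp only [hσdef]; linarith
    have hσclose : |σ - 1| < ε := by
      have : |t * s| < ε/3 := by
        rw [abs_mul, abs_of_pos ht0]; linarith
      simp only [hσdef, add_sub_cancel_left]
      linarith
    have heq : Φ (σ • (u + h)) = Φ (u + h) := hhom (u + h) m1 σ hσpos hσclose
    have m2 : σ • (u + h) ∈ Metric.ball u ε := by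
      rw [Metric.mem_ball, dist_eq_norm]
      have hrw : σ • (u + h) - u = h + (t*s) • (u + h) := by
        rw [hσdef, add_smul, one_smul]; abel
      rw [hrw]
      calc ‖h + (t*s) • (u+h)‖ ≤ ‖h‖ + ‖(t*s) • (u+h)‖ := norm_add_le _ _
        _ = ‖h‖ + t * |s| * ‖u+h‖ := by rw [norm_smul, Real.norm_eq_abs, abs_mul, abs_of_pos ht0]
        _ ≤ ‖h‖ + t * |s| * (‖u‖ + ‖h‖) := by
            have := norm_add_le u h
            nlinarith [mul_nonneg ht0.le (abs_nonneg s)]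
        _ < ε := by nlinarith [mul_nonneg ht0.le (abs_nonneg s), abs_nonneg s, ht0.le]
    have m3 : u + h + t • (s • u) ∈ Metric.ball u ε := by
      rw [Metric.mem_ball, dist_eq_norm]
      have hrw : u + h + t • (s • u) - u = h + (t*s) • u := by
        rw [smul_smul]; abel
      rw [hrw]
      calc ‖h + (t*s) • u‖ ≤ ‖h‖ + ‖(t*s) • u‖ := norm_add_le _ _
        _ = ‖h‖ + t * |s| * ‖u‖ := by rw [norm_smul, Real.norm_eq_abs, abs_mul, abs_of_pos ht0]
        _ < ε := by nlinarith [mul_nonneg ht0.le (abs_nonneg s), abs_nonneg s, ht0.le, norm_nonneg h]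
    -- Lipschitz estimate
    have hdist := hlip.dist_le_mul _ m3 _ m2
    have hdiff : u + h + t • (s • u) - σ • (u + h) = (-(t*s)) • h := by
      rw [hσdef]; module
    have hdd : dist (u + h + t • (s • u)) (σ • (u + h)) = t * |s| * ‖h‖ := by
      rw [dist_eq_norm, hdiff, norm_smul, Real.norm_eq_abs, abs_neg, abs_mul, abs_of_pos ht0]
    rw [hdd] at hdist
    rw [Real.dist_eq] at hdist
    have hnum : |Φ (u + h + t • (s • u)) - Φ (u + h)| ≤ (C:ℝ) * (t * |s| * ‖h‖) := by
      rw [← heq]; exact hdist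
    rw [Real.norm_eq_abs, abs_div, abs_of_pos ht0, div_le_iff₀ ht0]
    calc |Φ (u + h + t • (s • u)) - Φ (u + h)| ≤ (C:ℝ) * (t * |s| * ‖h‖) := hnum
      _ = (C:ℝ) * (|s| * ‖h‖) * t := by ring
  have hg : Tendsto (fun p : X × ℝ => (C:ℝ) * (|s| * ‖p.1‖))
      ((nhds (0:X)) ×ˢ (nhdsWithin (0:ℝ) (Set.Ioi 0))) (nhds 0) := by
    have h1 : Tendsto (fun p : X × ℝ => ‖p.1‖)
        ((nhds (0:X)) ×ˢ (nhdsWithin (0:ℝ) (Set.Ioi 0))) (nhds ‖(0:X)‖) :=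
      (continuous_norm.tendsto (0:X)).comp tendsto_fst
    have h2 := h1.const_mul ((C:ℝ) * |s|)
    simp only [norm_zero, mul_zero] at h2
    simpa [mul_assoc] using h2
  exact (squeeze_zero_norm' key hg).limsup_eq
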